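/- Let G and G' be groups with identity elements e and e' respectively, Q a nonempty set, and f : G → G' a bijective anti-homomorphism, i.e., f(xy) = f(y)f(x) for all x, y ∈ G. Let μ : G × Q → [0,1] be an α-Q-fuzzy subgroup of G, and let ν : G' × Q → [0,1] be its image under f, characterized by ν(f(x), q) = μ(x, q) for all x ∈ G and q ∈ Q. If the set X = { x ∈ G : μ(x, q) = μ(e, q) for all q ∈ Q } is abelian (any two of its elements commute), then the set X' = { y ∈ G' : ν(y, q) = ν(e', q) for all q ∈ Q } is abelian; that is, the image of an α-Q-fuzzy abelian subgroup under a bijective anti-homomorphism is an α-Q-fuzzy abelian subgroup. -/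

import Mathlib

/-- `μ` is an α-Q-fuzzy subgroup of the group `G`. -/
def IsAlphaQFuzzySubgroup {G Q : Type*} [Group G] (μ : G → Q → ℝ) : Prop :=
  (∀ x y q, μ (x * y) q ≥ min (μ x q) (μ y q)) ∧ (∀ x q, μ x⁻¹ q ≥ μ x q)

/-- The image of an α-Q-fuzzy abelian subgroup under a bijective
anti-homomorphism is α-Q-fuzzy abelian: if
`X = {x ∈ G | μ(x,q) = μ(e,q) ∀q}` is abelian, then so is
`X' = {y ∈ G' | ν(y,q) = ν(e',q) ∀q}` where `ν(f(x),q) = μ(x,q)`. -/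
theorem image_abelian {G G' Q : Type*} [Group G] [Group G'] [Nonempty Q]
    (f : G → G') (hbij : Function.Bijective f)
    (hanti : ∀ x y : G, f (x * y) = f y * f x)
    (μ : G → Q → ℝ)
    (h01 : ∀ x q, μ x q ∈ Set.Icc (0 : ℝ) 1)
    (hμ : IsAlphaQFuzzySubgroup μ)
    (ν : G' → Q → ℝ)
    (hνdef : ∀ (x : G) (q : Q), ν (f x) q = μ x q)
    (habel : ∀ a ∈ {x : G | ∀ q : Q, μ x q = μ (1 : G) q},
      ∀ b ∈ {x : G | ∀ q : Q, μ x q = μ (1 : G) q}, a * b = b * a) :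
    ∀ a ∈ {y : G' | ∀ q : Q, ν y q = ν (1 : G') q},
      ∀ b ∈ {y : G' | ∀ q : Q, ν y q = ν (1 : G') q}, a * b = b * a := by
  have hf1 : f 1 = 1 := by
    have := hanti 1 1
    rw [one_mul] at this
    exact left_eq_mul.mp this
  intro a ha b hb
  obtain ⟨x, rfl⟩ := hbij.2 a
  obtain ⟨y, rfl⟩ := hbij.2 b
  have hx : ∀ q, μ x q = μ 1 q := fun q => by
    have := ha q; rwa [← hf1, hνdef, hνdef] at this
  have hy : ∀ q, μ y q = μ 1 q := fun q => by
    have := hb q; rwa [← hf1, hνdef, hνdef] at this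
  have hc := habel x hx y hy
  rw [← hanti, ← hanti, hc]
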